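/- Suppose JA and JB are affine maps and that RAγ∘RAγ = RBγ∘RBγ. Then for all γ ∈ (0,1) and λ ∈ (0,1], the two Aragón Artacho–Campoy operators commute: T(Aγ,Bγ)∘T(Bγ,Aγ) = T(Bγ,Aγ)∘T(Aγ,Bγ). -/
import Mathlib


theorem aacaStmt14 {X : Type*} [NormedAddCommGroup X] [InnerProductSpace ℝ X] [CompleteSpace X]
    (JA JB : X → X)
    (hJA : ∀ (x y : X) (t : ℝ), JA (t • x + (1 - t) • y) = t • JA x + (1 - t) • JA y)
    (hJB : ∀ (x y : X) (t : ℝ), JB (t • x + (1 - t) • y) = t • JB x + (1 - t) • JB y)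
    (w : X) (γ lam : ℝ)
    (hγ : γ ∈ Set.Ioo (0 : ℝ) 1) (hlam : lam ∈ Set.Ioc (0 : ℝ) 1)
    (RAγ RBγ TAγBγ TBγAγ : X → X)
    (hRAγ : ∀ x, RAγ x = (2 * γ) • JA x + (2 * (1 - γ)) • w - x)
    (hRBγ : ∀ x, RBγ x = (2 * γ) • JB x + (2 * (1 - γ)) • w - x)
    (hTAB : ∀ x, TAγBγ x = (1 - lam) • x + lam • RBγ (RAγ x))
    (hTBA : ∀ x, TBγAγ x = (1 - lam) • x + lam • RAγ (RBγ x))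
    (hsq : ∀ x : X, RAγ (RAγ x) = RBγ (RBγ x)) :
    ∀ x : X, TAγBγ (TBγAγ x) = TBγAγ (TAγBγ x) := by
  -- RAγ and RBγ are affine
  have hA : ∀ (x y : X) (t : ℝ),
      RAγ (t • x + (1 - t) • y) = t • RAγ x + (1 - t) • RAγ y := by
    intro x y t
    rw [hRAγ, hJA, hRAγ, hRAγ]
    module
  have hB : ∀ (x y : X) (t : ℝ),
      RBγ (t • x + (1 - t) • y) = t • RBγ x + (1 - t) • RBγ y := by
    intro x y t
    rw [hRBγ, hJB, hRBγ, hRBγ]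
    module
  -- affine form with coefficients (1 - lam, lam)
  have hA' : ∀ (x y : X),
      RAγ ((1 - lam) • x + lam • y) = (1 - lam) • RAγ x + lam • RAγ y := by
    intro x y
    have := hA x y (1 - lam)
    rwa [sub_sub_cancel] at this
  have hB' : ∀ (x y : X),
      RBγ ((1 - lam) • x + lam • y) = (1 - lam) • RBγ x + lam • RBγ y := by
    intro x y
    have := hB x y (1 - lam)
    rwa [sub_sub_cancel] at this
  -- the compositions S = RBγ∘RAγ and U = RAγ∘RBγ commute
  have hSU : ∀ x : X, RBγ (RAγ (RAγ (RBγ x))) = RAγ (RBγ (RBγ (RAγ x))) := by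
    intro x
    rw [hsq (RBγ x), ← hsq (RAγ x), hsq (RAγ (RAγ x)), hsq x]
  intro x
  rw [hTBA x, hTAB x, hTAB, hTBA, hA' x (RAγ (RBγ x)), hB' x (RBγ (RAγ x)),
    hB' (RAγ x), hA' (RBγ x), hSU]
  module
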